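/- The lower level set L_f = {X feasible : f(X) ≤ f(X⁰)} of the sign-constrained log-determinant objective is compact: it is closed and contained in {X : m I ⪯ X ⪯ M I} for some positive constants 0 < m ≤ M. -/

import Mathlib

open Matrix

/-- The feasible set of the sign-constrained log-determinant program: symmetric positive
definite matrices with nonpositive off-diagonal entries vanishing on the disconnectivity
set `E`. -/
def feasible {p : ℕ} (E : Set (Fin p × Fin p)) (X : Matrix (Fin p) (Fin p) ℝ) : Prop :=
  X.PosDef ∧ (∀ i j, i ≠ j → X i j ≤ 0) ∧ (∀ i j, (i, j) ∈ E → X i j = 0)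

/-- The objective `f(X) = -log det X + tr(X S) + Σ_{i≠j} λ_{ij} |X_{ij}|`. -/
noncomputable def obj {p : ℕ} (S : Matrix (Fin p) (Fin p) ℝ) (l : Fin p → Fin p → ℝ)
    (X : Matrix (Fin p) (Fin p) ℝ) : ℝ :=
  -Real.log X.det + (X * S).trace + ∑ i, ∑ j, if i ≠ j then l i j * |X i j| else 0

section Aux

variable {p : ℕ}



lemma psd_diag_nonneg {X : Matrix (Fin p) (Fin p) ℝ} (hX : X.PosSemidef) (i : Fin p) :
    0 ≤ X i i := by
  have h := hX.dotProduct_mulVec_nonneg (Pi.single i 1)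
  simpa [dotProduct, mulVec, Pi.single_apply] using h

lemma herm_entry {X : Matrix (Fin p) (Fin p) ℝ} (hX : X.IsHermitian) (i j : Fin p) :
    X j i = X i j := by
  have := congrFun (congrFun hX i) j
  simpa [conjTranspose_apply] using this

lemma psd_abs_offdiag {X : Matrix (Fin p) (Fin p) ℝ} (hX : X.PosSemidef) (i j : Fin p) :
    |X i j| ≤ (X i i + X j j) / 2 := by
  have hY := hX.submatrix ![i, j]
  have h1 := hY.dotProduct_mulVec_nonneg ![1, 1]
  have h2 := hY.dotProduct_mulVec_nonneg ![1, -1]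
  simp [dotProduct, mulVec, Fin.sum_univ_two, submatrix_apply] at h1 h2
  have hs := herm_entry hX.1 i j
  rw [abs_le]; constructor <;> nlinarith

lemma psd_trace_zero {X : Matrix (Fin p) (Fin p) ℝ} (hX : X.PosSemidef)
    (h : X.trace = 0) : X = 0 := by
  have hd : ∀ i, X i i = 0 := by
    intro i
    have hsum : ∑ i, X i i = 0 := h
    have := (Finset.sum_eq_zero_iff_of_nonneg (fun i _ => psd_diag_nonneg hX i)).mp hsum
    exact this i (Finset.mem_univ i)
  ext i j
  have := psd_abs_offdiag hX i j
  rw [hd i, hd j] at this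
  simpa using abs_nonpos_iff.mp (by linarith)

lemma trace_mul_psd_nonneg {X S : Matrix (Fin p) (Fin p) ℝ} (hX : X.PosSemidef)
    (hS : S.PosSemidef) : 0 ≤ (X * S).trace := by
  obtain ⟨B, hB⟩ : ∃ B : Matrix (Fin p) (Fin p) ℝ, X = star B * B := by
    open scoped MatrixOrder in exact CStarAlgebra.nonneg_iff_eq_star_mul_self.mp hX.nonneg
  subst hB
  rw [Matrix.mul_assoc, Matrix.trace_mul_comm]
  have hP : (B * S * Bᴴ).PosSemidef := hS.mul_mul_conjTranspose_same B
  rw [Matrix.trace]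
  exact Finset.sum_nonneg fun i _ => psd_diag_nonneg hP i
lemma trace_eq_sum_eig {X : Matrix (Fin p) (Fin p) ℝ} (hX : X.IsHermitian) :
    X.trace = ∑ i, hX.eigenvalues i := by
  conv_lhs => rw [hX.spectral_theorem, Unitary.conjStarAlgAut_apply]
  rw [Matrix.trace_mul_cycle]
  have h1 : (star (hX.eigenvectorUnitary : Matrix (Fin p) (Fin p) ℝ)) *
      (hX.eigenvectorUnitary : Matrix (Fin p) (Fin p) ℝ) = 1 :=
    (Unitary.mem_iff.mp (hX.eigenvectorUnitary).2).1
  rw [h1, Matrix.one_mul, Matrix.trace_diagonal]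
  simp

lemma det_eq_prod_eig {X : Matrix (Fin p) (Fin p) ℝ} (hX : X.IsHermitian) :
    X.det = ∏ i, hX.eigenvalues i := by
  have := hX.det_eq_prod_eigenvalues
  simpa using this

lemma conj_diag_psd {X : Matrix (Fin p) (Fin p) ℝ} (hX : X.IsHermitian) (f : Fin p → ℝ)
    (hf : ∀ i, 0 ≤ f i) :
    ((hX.eigenvectorUnitary : Matrix (Fin p) (Fin p) ℝ) * diagonal f *
      (star (hX.eigenvectorUnitary : Matrix (Fin p) (Fin p) ℝ))).PosSemidef := by
  have := (posSemidef_diagonal_iff.mpr hf).mul_mul_conjTranspose_same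
    (hX.eigenvectorUnitary : Matrix (Fin p) (Fin p) ℝ)
  simpa [star_eq_conjTranspose] using this

lemma sub_smul_one_psd {X : Matrix (Fin p) (Fin p) ℝ} (hX : X.IsHermitian) {a : ℝ}
    (h : ∀ i, a ≤ hX.eigenvalues i) : (X - a • (1 : Matrix (Fin p) (Fin p) ℝ)).PosSemidef := by
  set U : Matrix (Fin p) (Fin p) ℝ := (hX.eigenvectorUnitary : Matrix (Fin p) (Fin p) ℝ) with hU
  have h2 : U * star U = 1 := (Unitary.mem_iff.mp (hX.eigenvectorUnitary).2).2
  have key : X - a • (1 : Matrix (Fin p) (Fin p) ℝ) =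
      U * diagonal (fun i => hX.eigenvalues i - a) * star U := by
    have hdiag : (diagonal (fun i => hX.eigenvalues i - a) : Matrix (Fin p) (Fin p) ℝ) =
        diagonal (fun i => hX.eigenvalues i) - a • 1 := by
      rw [Matrix.smul_one_eq_diagonal, ← diagonal_sub]
    rw [hdiag, Matrix.mul_sub, Matrix.sub_mul]
    congr 1
    · conv_lhs => rw [hX.spectral_theorem, Unitary.conjStarAlgAut_apply]
      congr 1
    · rw [Matrix.mul_smul, Matrix.mul_one, Matrix.smul_mul, h2]
  rw [key]
  exact conj_diag_psd hX _ fun i => sub_nonneg.mpr (h i)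

lemma smul_one_sub_psd {X : Matrix (Fin p) (Fin p) ℝ} (hX : X.IsHermitian) {b : ℝ}
    (h : ∀ i, hX.eigenvalues i ≤ b) : (b • (1 : Matrix (Fin p) (Fin p) ℝ) - X).PosSemidef := by
  set U : Matrix (Fin p) (Fin p) ℝ := (hX.eigenvectorUnitary : Matrix (Fin p) (Fin p) ℝ) with hU
  have h2 : U * star U = 1 := (Unitary.mem_iff.mp (hX.eigenvectorUnitary).2).2
  have key : b • (1 : Matrix (Fin p) (Fin p) ℝ) - X =
      U * diagonal (fun i => b - hX.eigenvalues i) * star U := by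
    have hdiag : (diagonal (fun i => b - hX.eigenvalues i) : Matrix (Fin p) (Fin p) ℝ) =
        b • 1 - diagonal (fun i => hX.eigenvalues i) := by
      rw [Matrix.smul_one_eq_diagonal, ← diagonal_sub]
    rw [hdiag, Matrix.mul_sub, Matrix.sub_mul]
    congr 1
    · rw [Matrix.mul_smul, Matrix.mul_one, Matrix.smul_mul, h2]
    · conv_lhs => rw [hX.spectral_theorem, Unitary.conjStarAlgAut_apply]
      congr 1
  rw [key]
  exact conj_diag_psd hX _ fun i => sub_nonneg.mpr (h i)
lemma continuous_entry (i j : Fin p) : Continuous (fun X : Matrix (Fin p) (Fin p) ℝ => X i j) :=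
  (continuous_apply j).comp (continuous_apply i)

lemma continuous_traceMul (S : Matrix (Fin p) (Fin p) ℝ) :
    Continuous (fun X : Matrix (Fin p) (Fin p) ℝ => (X * S).trace) :=
  (continuous_id.matrix_mul continuous_const).matrix_trace

lemma continuous_pen (l : Fin p → Fin p → ℝ) :
    Continuous (fun X : Matrix (Fin p) (Fin p) ℝ =>
      ∑ i, ∑ j, if i ≠ j then l i j * |X i j| else 0) := by
  refine continuous_finset_sum _ fun i _ => continuous_finset_sum _ fun j _ => ?_
  by_cases h : i ≠ j
  · simp only [if_pos h]
    exact continuous_const.mul (continuous_entry i j).abs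
  · simp only [if_neg h]
    exact continuous_const

lemma isClosed_psd : IsClosed {X : Matrix (Fin p) (Fin p) ℝ | X.PosSemidef} := by
  have : {X : Matrix (Fin p) (Fin p) ℝ | X.PosSemidef} =
      {X | Xᴴ = X} ∩ ⋂ v : Fin p → ℝ, {X | 0 ≤ star v ⬝ᵥ X *ᵥ v} := by
    ext X
    simp only [Set.mem_setOf_eq, Set.mem_inter_iff, Set.mem_iInter, Matrix.posSemidef_iff_dotProduct_mulVec,
      Matrix.IsHermitian]
  rw [this]
  refine (isClosed_eq (continuous_id.matrix_conjTranspose) continuous_id).inter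
    (isClosed_iInter fun v => isClosed_le continuous_const ?_)
  have : Continuous fun X : Matrix (Fin p) (Fin p) ℝ => star v ⬝ᵥ X *ᵥ v := by
    simp only [dotProduct, mulVec]
    exact continuous_finset_sum _ fun i _ => continuous_const.mul
      (continuous_finset_sum _ fun j _ => (continuous_entry i j).mul continuous_const)
  exact this

lemma isClosed_signs : IsClosed {X : Matrix (Fin p) (Fin p) ℝ | ∀ i j, i ≠ j → X i j ≤ 0} := by
  have : {X : Matrix (Fin p) (Fin p) ℝ | ∀ i j, i ≠ j → X i j ≤ 0} =
      ⋂ i, ⋂ j, ⋂ (_ : i ≠ j), {X | X i j ≤ 0} := by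
    ext X; simp
  rw [this]
  exact isClosed_iInter fun i => isClosed_iInter fun j => isClosed_iInter fun _ =>
    isClosed_le (continuous_entry i j) continuous_const

lemma isClosed_Ezero (E : Set (Fin p × Fin p)) :
    IsClosed {X : Matrix (Fin p) (Fin p) ℝ | ∀ i j, (i, j) ∈ E → X i j = 0} := by
  have : {X : Matrix (Fin p) (Fin p) ℝ | ∀ i j, (i, j) ∈ E → X i j = 0} =
      ⋂ i, ⋂ j, ⋂ (_ : (i, j) ∈ E), {X | X i j = 0} := by
    ext X; simp
  rw [this]
  exact isClosed_iInter fun i => isClosed_iInter fun j => isClosed_iInter fun _ =>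
    isClosed_eq (continuous_entry i j) continuous_const

lemma isCompact_box (M : ℝ) :
    IsCompact {X : Matrix (Fin p) (Fin p) ℝ | ∀ i j, X i j ∈ Set.Icc (-M) M} := by
  have h : IsCompact (Set.univ.pi fun _ : Fin p => Set.univ.pi fun _ : Fin p =>
      Set.Icc (-M) M : Set (Fin p → Fin p → ℝ)) :=
    isCompact_univ_pi fun _ => isCompact_univ_pi fun _ => isCompact_Icc
  change IsCompact {X : Fin p → Fin p → ℝ | ∀ i j, X i j ∈ Set.Icc (-M) M}
  convert h using 1
  ext X
  simp [Set.mem_pi, Set.mem_Icc, Pi.le_def, forall_and]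
lemma psd_smul {X : Matrix (Fin p) (Fin p) ℝ} (hX : X.PosSemidef) {c : ℝ} (hc : 0 ≤ c) :
    (c • X).PosSemidef := by
  refine Matrix.PosSemidef.of_dotProduct_mulVec_nonneg ?_ fun v => ?_
  · unfold Matrix.IsHermitian
    rw [conjTranspose_smul, hX.1]
    simp
  · rw [smul_mulVec, dotProduct_smul, smul_eq_mul]
    exact mul_nonneg hc (hX.dotProduct_mulVec_nonneg v)

lemma pen_nonneg (E : Set (Fin p × Fin p)) (l : Fin p → Fin p → ℝ)
    (hl : ∀ i j, i ≠ j → (i, j) ∉ E → 0 < l i j) {X : Matrix (Fin p) (Fin p) ℝ}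
    (hEz : ∀ i j, (i, j) ∈ E → X i j = 0) (i j : Fin p) :
    0 ≤ if i ≠ j then l i j * |X i j| else 0 := by
  by_cases h : i ≠ j
  · simp only [if_pos h]
    by_cases hE : (i, j) ∈ E
    · rw [hEz i j hE]; simp
    · exact mul_nonneg (hl i j h hE).le (abs_nonneg _)
  · simp [h]

lemma coercive (S : Matrix (Fin p) (Fin p) ℝ) (hS : S.PosSemidef) (hSdiag : ∀ i, 0 < S i i)
    (E : Set (Fin p × Fin p)) (l : Fin p → Fin p → ℝ)
    (hl : ∀ i j, i ≠ j → (i, j) ∉ E → 0 < l i j) :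
    ∃ δ : ℝ, 0 < δ ∧ ∀ X : Matrix (Fin p) (Fin p) ℝ, X.PosSemidef →
      (∀ i j, i ≠ j → X i j ≤ 0) → (∀ i j, (i, j) ∈ E → X i j = 0) →
      δ * X.trace ≤ (X * S).trace + ∑ i, ∑ j, if i ≠ j then l i j * |X i j| else 0 := by
  set g : Matrix (Fin p) (Fin p) ℝ → ℝ :=
    fun X => (X * S).trace + ∑ i, ∑ j, if i ≠ j then l i j * |X i j| else 0 with hg
  have hgcont : Continuous g := (continuous_traceMul S).add (continuous_pen l)
  set K₁ : Set (Matrix (Fin p) (Fin p) ℝ) :=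
    {X | X.PosSemidef ∧ (∀ i j, i ≠ j → X i j ≤ 0) ∧ (∀ i j, (i, j) ∈ E → X i j = 0) ∧
      X.trace = 1} with hK₁
  -- g is positive on K₁
  have hgpos : ∀ X ∈ K₁, 0 < g X := by
    rintro X ⟨hpsd, hsign, hEz, htr⟩
    have h1 : 0 ≤ (X * S).trace := trace_mul_psd_nonneg hpsd hS
    have hterm := pen_nonneg E l hl hEz
    have h2 : 0 ≤ ∑ i, ∑ j, if i ≠ j then l i j * |X i j| else 0 :=
      Finset.sum_nonneg fun i _ => Finset.sum_nonneg fun j _ => hterm i j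
    by_contra hng
    push_neg at hng
    have hpen0 : ∑ i, ∑ j, (if i ≠ j then l i j * |X i j| else 0) = 0 := by
      simp only [hg] at hng; linarith
    have htr0 : (X * S).trace = 0 := by simp only [hg] at hng; linarith
    have hpenterm : ∀ i ∈ Finset.univ, ∀ j ∈ Finset.univ,
        (if i ≠ j then l i j * |X i j| else 0) = 0 := by
      intro i hi
      have hinner := (Finset.sum_eq_zero_iff_of_nonneg
        (fun i _ => Finset.sum_nonneg fun j _ => hterm i j)).mp hpen0 i hi
      exact fun j hj => (Finset.sum_eq_zero_iff_of_nonneg (fun j _ => hterm i j)).mp hinner j hj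
    have hoff : ∀ i j, i ≠ j → X i j = 0 := by
      intro i j hij
      by_cases hEij : (i, j) ∈ E
      · exact hEz i j hEij
      · have := hpenterm i (Finset.mem_univ i) j (Finset.mem_univ j)
        rw [if_pos hij] at this
        rcases mul_eq_zero.mp this with h | h
        · exact absurd h (hl i j hij hEij).ne'
        · exact abs_eq_zero.mp h
    have hexp : (X * S).trace = ∑ i, X i i * S i i := by
      rw [Matrix.trace]
      refine Finset.sum_congr rfl fun i _ => ?_
      rw [Matrix.diag_apply, Matrix.mul_apply]
      refine Finset.sum_eq_single i (fun j _ hji => ?_) (by simp)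
      rw [hoff i j (Ne.symm hji), zero_mul]
    have hdiag0 : ∀ i ∈ Finset.univ, X i i * S i i = 0 := by
      refine (Finset.sum_eq_zero_iff_of_nonneg fun i _ =>
        mul_nonneg (psd_diag_nonneg hpsd i) (hSdiag i).le).mp ?_
      rw [← hexp, htr0]
    have : X.trace = 0 := by
      rw [Matrix.trace]
      refine Finset.sum_eq_zero fun i _ => ?_
      rcases mul_eq_zero.mp (hdiag0 i (Finset.mem_univ i)) with h | h
      · exact h
      · exact absurd h (hSdiag i).ne'
    rw [htr] at this; norm_num at this
  -- K₁ compact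
  have hK₁closed : IsClosed K₁ := by
    have : K₁ = {X : Matrix (Fin p) (Fin p) ℝ | X.PosSemidef} ∩
        ({X | ∀ i j, i ≠ j → X i j ≤ 0} ∩ ({X | ∀ i j, (i, j) ∈ E → X i j = 0} ∩
         {X | X.trace = 1})) := by
      ext X; simp [hK₁, Set.mem_setOf_eq, and_assoc]
    rw [this]
    exact isClosed_psd.inter (isClosed_signs.inter ((isClosed_Ezero E).inter
      (isClosed_eq (continuous_id.matrix_trace) continuous_const)))
  have hK₁sub : K₁ ⊆ {X : Matrix (Fin p) (Fin p) ℝ | ∀ i j, X i j ∈ Set.Icc (-(1:ℝ)) 1} := by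
    rintro X ⟨hpsd, hsign, hEz, htr⟩ 
    have hdiagle : ∀ i, X i i ≤ 1 := by
      intro i
      calc X i i ≤ ∑ j, X j j :=
            Finset.single_le_sum (fun j _ => psd_diag_nonneg hpsd j) (Finset.mem_univ i)
        _ = 1 := htr
    intro i j
    have habs := psd_abs_offdiag hpsd i j
    have h1 := psd_diag_nonneg hpsd i
    have h2 := psd_diag_nonneg hpsd j
    have : |X i j| ≤ 1 := le_trans habs (by linarith [hdiagle i, hdiagle j])
    exact ⟨neg_le_of_abs_le this, le_of_abs_le this⟩
  have hK₁cpt : IsCompact K₁ := (isCompact_box 1).of_isClosed_subset hK₁closed hK₁sub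
  -- zero-trace case helper
  have hzero : ∀ X : Matrix (Fin p) (Fin p) ℝ, X.PosSemidef →
      (∀ i j, (i, j) ∈ E → X i j = 0) → X.trace = 0 → ∀ δ : ℝ, δ * X.trace ≤ g X := by
    intro X hpsd hEz htr δ
    have hX0 : X = 0 := psd_trace_zero hpsd htr
    subst hX0
    simp [hg, htr]
  by_cases hne : K₁.Nonempty
  · obtain ⟨Z, hZ, hmin⟩ := hK₁cpt.exists_isMinOn hne hgcont.continuousOn
    refine ⟨g Z, hgpos Z hZ, fun X hpsd hsign hEz => ?_⟩
    have ht0 : 0 ≤ X.trace := Finset.sum_nonneg fun i _ => psd_diag_nonneg hpsd i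
    rcases ht0.eq_or_lt with ht | ht
    · exact hzero X hpsd hEz ht.symm _
    · set t := X.trace with htdef
      have hY : (t⁻¹ • X) ∈ K₁ := by
        refine ⟨psd_smul hpsd (inv_nonneg.mpr ht0), fun i j hij => ?_, fun i j hij => ?_, ?_⟩
        · simp only [Matrix.smul_apply, smul_eq_mul]
          exact mul_nonpos_of_nonneg_of_nonpos (inv_nonneg.mpr ht0) (hsign i j hij)
        · simp only [Matrix.smul_apply, smul_eq_mul, hEz i j hij, mul_zero]
        · rw [Matrix.trace_smul, smul_eq_mul, inv_mul_cancel₀ ht.ne']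
      have hgY : g (t⁻¹ • X) = t⁻¹ * g X := by
        simp only [hg]
        rw [Matrix.smul_mul, Matrix.trace_smul, smul_eq_mul, mul_add]
        congr 1
        rw [Finset.mul_sum]
        refine Finset.sum_congr rfl fun i _ => ?_
        rw [Finset.mul_sum]
        refine Finset.sum_congr rfl fun j _ => ?_
        by_cases hij : i ≠ j
        · simp only [if_pos hij, Matrix.smul_apply, smul_eq_mul, abs_mul,
            abs_of_nonneg (inv_nonneg.mpr ht0)]
          ring
        · simp [hij]
      have hδ : g Z ≤ t⁻¹ * g X := by
        have := hmin hY
        simp only [Set.mem_setOf_eq] at this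
        rwa [hgY] at this
      calc g Z * t ≤ (t⁻¹ * g X) * t := by
            exact mul_le_mul_of_nonneg_right hδ ht0
        _ = g X := by field_simp
  · refine ⟨1, one_pos, fun X hpsd hsign hEz => ?_⟩
    have ht0 : 0 ≤ X.trace := Finset.sum_nonneg fun i _ => psd_diag_nonneg hpsd i
    rcases ht0.eq_or_lt with ht | ht
    · exact hzero X hpsd hEz ht.symm _
    · exfalso
      refine hne ⟨(X.trace)⁻¹ • X, psd_smul hpsd (inv_nonneg.mpr ht0), fun i j hij => ?_,
        fun i j hij => ?_, ?_⟩
      · simp only [Matrix.smul_apply, smul_eq_mul]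
        exact mul_nonpos_of_nonneg_of_nonpos (inv_nonneg.mpr ht0) (hsign i j hij)
      · simp only [Matrix.smul_apply, smul_eq_mul, hEz i j hij, mul_zero]
      · rw [Matrix.trace_smul, smul_eq_mul, inv_mul_cancel₀ ht.ne']

lemma pd_diag_pos {X : Matrix (Fin p) (Fin p) ℝ} (hX : X.PosDef) (i : Fin p) : 0 < X i i := by
  have h := hX.dotProduct_mulVec_pos (x := Pi.single i 1) (by
    intro hcon
    have := congrFun hcon i
    simp at this)
  simpa [dotProduct, mulVec, Pi.single_apply] using h

lemma trace_bound (δ c : ℝ) (hδ : 0 < δ) (P : ℕ) :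
    ∃ T : ℝ, 1 ≤ T ∧ ∀ t : ℝ, 0 < t → δ * t - (P : ℝ) * Real.log t ≤ c → t ≤ T := by
  set T0 : ℝ := max 1 ((|c| + 2 * P) / δ) with hT0
  have hT01 : 1 ≤ T0 := le_max_left _ _
  refine ⟨T0 ^ 2, by nlinarith, fun t ht hineq => ?_⟩
  set u : ℝ := Real.sqrt t with hu
  have hu0 : 0 < u := Real.sqrt_pos.mpr ht
  have hut : u ^ 2 = t := Real.sq_sqrt ht.le
  have hlog : Real.log t ≤ 2 * u := by
    have h1 : Real.log u = Real.log t / 2 := Real.log_sqrt ht.le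
    have h2 : Real.log u ≤ u - 1 := Real.log_le_sub_one_of_pos hu0
    linarith
  have hkey : δ * u ^ 2 ≤ c + 2 * P * u := by
    have : (P : ℝ) * Real.log t ≤ P * (2 * u) :=
      mul_le_mul_of_nonneg_left hlog (Nat.cast_nonneg P)
    nlinarith
  have huT : u ≤ T0 := by
    rcases le_or_gt u 1 with h | h
    · exact h.trans hT01
    · have hcabs : c ≤ |c| * u := by
        calc c ≤ |c| := le_abs_self c
          _ = |c| * 1 := (mul_one _).symm
          _ ≤ |c| * u := by nlinarith [abs_nonneg c]
      have hδu : δ * u ≤ |c| + 2 * P := by nlinarith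
      have : u ≤ (|c| + 2 * P) / δ := by
        rw [le_div_iff₀ hδ]
        linarith [mul_comm u δ]
      exact this.trans (le_max_right _ _)
  calc t = u ^ 2 := hut.symm
    _ ≤ T0 ^ 2 := by nlinarith

end Aux

/-- The lower level set `L_f = {X feasible : f(X) ≤ f(X⁰)}` of the
sign-constrained log-determinant objective is compact: it is closed and contained in
`{X : m I ⪯ X ⪯ M I}` for some constants `0 < m ≤ M`. -/
theorem stmt_6 {p : ℕ} (S : Matrix (Fin p) (Fin p) ℝ) (hS : S.PosSemidef)
    (hSdiag : ∀ i, 0 < S i i)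
    (E : Set (Fin p × Fin p)) (hE : ∀ ij ∈ E, ij.1 ≠ ij.2)
    (l : Fin p → Fin p → ℝ) (hl : ∀ i j, i ≠ j → (i, j) ∉ E → 0 < l i j)
    (X0 : Matrix (Fin p) (Fin p) ℝ) (hX0 : feasible E X0) :
    IsCompact {X : Matrix (Fin p) (Fin p) ℝ | feasible E X ∧ obj S l X ≤ obj S l X0} ∧
    IsClosed {X : Matrix (Fin p) (Fin p) ℝ | feasible E X ∧ obj S l X ≤ obj S l X0} ∧
    ∃ m M : ℝ, 0 < m ∧ m ≤ M ∧
      ∀ X ∈ {X : Matrix (Fin p) (Fin p) ℝ | feasible E X ∧ obj S l X ≤ obj S l X0},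
        (X - m • (1 : Matrix (Fin p) (Fin p) ℝ)).PosSemidef ∧
        (M • (1 : Matrix (Fin p) (Fin p) ℝ) - X).PosSemidef := by
  classical
  rcases Nat.eq_zero_or_pos p with hp | hp
  · subst hp
    have hpsd : ∀ X : Matrix (Fin 0) (Fin 0) ℝ, X.PosSemidef := fun X =>
      ⟨by ext i j; exact i.elim0, fun v => by simp [Finsupp.sum, Finset.eq_empty_of_isEmpty v.support]⟩
    have hsub : Set.Subsingleton
        {X : Matrix (Fin 0) (Fin 0) ℝ | feasible E X ∧ obj S l X ≤ obj S l X0} :=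
      fun a _ b _ => by ext i j; exact i.elim0
    have hfin := hsub.finite
    exact ⟨hfin.isCompact, hfin.isClosed, 1, 1, one_pos, le_refl 1, fun X _ => ⟨hpsd _, hpsd _⟩⟩
  · haveI : Nonempty (Fin p) := Fin.pos_iff_nonempty.mp hp
    set c := obj S l X0 with hc
    obtain ⟨δ, hδ, hco⟩ := coercive S hS hSdiag E l hl
    obtain ⟨T, hT1, hTb⟩ := trace_bound δ c hδ p
    have hT0 : 0 < T := lt_of_lt_of_le one_pos hT1
    set m0 : ℝ := Real.exp (-c) / T ^ (p - 1) with hm0def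
    have hm0 : 0 < m0 := div_pos (Real.exp_pos _) (pow_pos hT0 _)
    set m : ℝ := min m0 T with hmdef
    have hm : 0 < m := lt_min hm0 hT0
    have hmM : m ≤ T := min_le_right _ _
    have hkey : ∀ X : Matrix (Fin p) (Fin p) ℝ, feasible E X → obj S l X ≤ c →
        (X - m • 1).PosSemidef ∧ (T • 1 - X).PosSemidef ∧ Real.exp (-c) ≤ X.det := by
      rintro X ⟨hpd, hsign, hEz⟩ hobjX
      have hpsd := hpd.posSemidef
      have hh := hpd.1
      have hpen : 0 ≤ ∑ i, ∑ j, if i ≠ j then l i j * |X i j| else 0 :=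
        Finset.sum_nonneg fun i _ => Finset.sum_nonneg fun j _ => pen_nonneg E l hl hEz i j
      have htrS : 0 ≤ (X * S).trace := trace_mul_psd_nonneg hpsd hS
      have hdetpos : 0 < X.det := hpd.det_pos
      have hobj' : -Real.log X.det + (X * S).trace +
          (∑ i, ∑ j, if i ≠ j then l i j * |X i j| else 0) ≤ c := hobjX
      have hdet : Real.exp (-c) ≤ X.det := by
        rw [← Real.exp_log hdetpos]
        exact Real.exp_le_exp.mpr (by linarith)
      have htrpos : 0 < X.trace :=
        Finset.sum_pos (fun i _ => pd_diag_pos hpd i) Finset.univ_nonempty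
      have hevle : ∀ i, hh.eigenvalues i ≤ X.trace := by
        intro i
        rw [trace_eq_sum_eig hh]
        exact Finset.single_le_sum (fun j _ => (hpd.eigenvalues_pos j).le) (Finset.mem_univ i)
      have hdetle : X.det ≤ X.trace ^ p := by
        rw [det_eq_prod_eig hh]
        calc ∏ i, hh.eigenvalues i ≤ ∏ _i : Fin p, X.trace :=
              Finset.prod_le_prod (fun i _ => (hpd.eigenvalues_pos i).le) (fun i _ => hevle i)
          _ = X.trace ^ p := by rw [Finset.prod_const, Finset.card_univ, Fintype.card_fin]
      have hlogle : Real.log X.det ≤ p * Real.log X.trace := by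
        calc Real.log X.det ≤ Real.log (X.trace ^ p) := Real.log_le_log hdetpos hdetle
          _ = p * Real.log X.trace := by rw [Real.log_pow]
      have hineq : δ * X.trace - p * Real.log X.trace ≤ c := by
        have h1 := hco X hpsd hsign hEz
        linarith
      have htrT : X.trace ≤ T := hTb _ htrpos hineq
      have hevT : ∀ i, hh.eigenvalues i ≤ T := fun i => (hevle i).trans htrT
      have hevm : ∀ i, m ≤ hh.eigenvalues i := by
        intro i
        have hprod : ∏ j ∈ Finset.univ.erase i, hh.eigenvalues j ≤ T ^ (p - 1) := by
          calc ∏ j ∈ Finset.univ.erase i, hh.eigenvalues j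
              ≤ ∏ _j ∈ Finset.univ.erase i, T :=
                Finset.prod_le_prod (fun j _ => (hpd.eigenvalues_pos j).le) (fun j _ => hevT j)
            _ = T ^ (p - 1) := by
                rw [Finset.prod_const, Finset.card_erase_of_mem (Finset.mem_univ i),
                  Finset.card_univ, Fintype.card_fin]
        have hdeteq : X.det = hh.eigenvalues i * ∏ j ∈ Finset.univ.erase i, hh.eigenvalues j := by
          rw [det_eq_prod_eig hh, ← Finset.mul_prod_erase Finset.univ _ (Finset.mem_univ i)]
        have hev_lb : Real.exp (-c) ≤ hh.eigenvalues i * T ^ (p - 1) := by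
          calc Real.exp (-c) ≤ X.det := hdet
            _ = _ := hdeteq
            _ ≤ hh.eigenvalues i * T ^ (p - 1) :=
                mul_le_mul_of_nonneg_left hprod (hpd.eigenvalues_pos i).le
        have hm0le : m0 ≤ hh.eigenvalues i := by
          rw [hm0def, div_le_iff₀ (pow_pos hT0 _)]
          linarith
        exact (min_le_left _ _).trans hm0le
      exact ⟨sub_smul_one_psd hh hevm, smul_one_sub_psd hh hevT, hdet⟩
    set d : ℝ := Real.exp (-c) with hd
    have hobj2 : Continuous (fun X : Matrix (Fin p) (Fin p) ℝ =>
        -Real.log (max X.det d) + (X * S).trace +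
          ∑ i, ∑ j, if i ≠ j then l i j * |X i j| else 0) := by
      refine ((Continuous.neg ?_).add (continuous_traceMul S)).add (continuous_pen l)
      rw [continuous_iff_continuousAt]
      intro X
      have hmax : Continuous fun X : Matrix (Fin p) (Fin p) ℝ => max X.det d :=
        (continuous_id.matrix_det).max continuous_const
      have hne : max X.det d ≠ 0 := ne_of_gt (lt_of_lt_of_le (Real.exp_pos _) (le_max_right _ _))
      exact ContinuousAt.comp (x := X) (Real.continuousAt_log hne) hmax.continuousAt
    have hLeq : {X : Matrix (Fin p) (Fin p) ℝ | feasible E X ∧ obj S l X ≤ c} =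
        ({X : Matrix (Fin p) (Fin p) ℝ | (X - m • 1).PosSemidef} ∩
        ({X | ∀ i j, i ≠ j → X i j ≤ 0} ∩ ({X | ∀ i j, (i, j) ∈ E → X i j = 0} ∩
        ({X | d ≤ X.det} ∩ {X | -Real.log (max X.det d) + (X * S).trace +
          (∑ i, ∑ j, if i ≠ j then l i j * |X i j| else 0) ≤ c})))) := by
      ext X
      simp only [Set.mem_setOf_eq, Set.mem_inter_iff]
      constructor
      · rintro ⟨hfeas, hobjX⟩
        obtain ⟨h1, h2, h3⟩ := hkey X hfeas hobjX
        obtain ⟨hpd, hsign, hEz⟩ := hfeas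
        refine ⟨h1, hsign, hEz, h3, ?_⟩
        rw [max_eq_left h3]
        exact hobjX
      · rintro ⟨h1, hsign, hEz, hdet, hobjX⟩
        have hpd : X.PosDef := by
          have hXeq : m • (1 : Matrix (Fin p) (Fin p) ℝ) + (X - m • 1) = X := by abel
          rw [← hXeq]
          refine Matrix.PosDef.add_posSemidef ?_ h1
          rw [Matrix.smul_one_eq_diagonal]
          exact posDef_diagonal_iff.mpr fun i => hm
        refine ⟨⟨hpd, hsign, hEz⟩, ?_⟩
        rw [max_eq_left hdet] at hobjX
        exact hobjX
    have hclosed : IsClosed {X : Matrix (Fin p) (Fin p) ℝ | feasible E X ∧ obj S l X ≤ c} := by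
      rw [hLeq]
      exact (isClosed_psd.preimage (continuous_id.sub continuous_const)).inter
        (isClosed_signs.inter ((isClosed_Ezero E).inter
          ((isClosed_le continuous_const continuous_id.matrix_det).inter
            (isClosed_le hobj2 continuous_const))))
    have hsubbox : {X : Matrix (Fin p) (Fin p) ℝ | feasible E X ∧ obj S l X ≤ c} ⊆
        {X : Matrix (Fin p) (Fin p) ℝ | ∀ i j, X i j ∈ Set.Icc (-T) T} := by
      rintro X ⟨hfeas, hobjX⟩
      obtain ⟨h1, h2, h3⟩ := hkey X hfeas hobjX
      obtain ⟨hpd, hsign, hEz⟩ := hfeas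
      have hpsd := hpd.posSemidef
      have hdiagle : ∀ i, X i i ≤ T := by
        intro i
        have h4 := psd_diag_nonneg h2 i
        simp only [Matrix.sub_apply, Matrix.smul_apply, Matrix.one_apply_eq, smul_eq_mul,
          mul_one] at h4
        linarith
      intro i j
      have habs : |X i j| ≤ T := by
        rcases eq_or_ne i j with rfl | hne
        · rw [abs_of_nonneg (psd_diag_nonneg hpsd i)]; exact hdiagle i
        · refine (psd_abs_offdiag hpsd i j).trans ?_
          have hi := psd_diag_nonneg hpsd i
          have hj := psd_diag_nonneg hpsd j
          have hdi := hdiagle i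
          have hdj := hdiagle j
          linarith
      exact ⟨neg_le_of_abs_le habs, le_of_abs_le habs⟩
    have hcpt : IsCompact {X : Matrix (Fin p) (Fin p) ℝ | feasible E X ∧ obj S l X ≤ c} :=
      (isCompact_box T).of_isClosed_subset hclosed hsubbox
    exact ⟨hcpt, hclosed, m, T, hm, hmM,
      fun X hX => ⟨(hkey X hX.1 hX.2).1, (hkey X hX.1 hX.2).2.1⟩⟩
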